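/- Let f : ℝ^d → [0,∞) be continuous on ℝ^d \ {0}, integrable near 0, and equal to the Fourier transform of a non-negative tempered measure μ on ℝ^d. Then for all φ, ψ in the Schwartz space S(ℝ^d), ∫_{ℝ^d} ∫_{ℝ^d} φ(x) f(x−y) ψ(y) dx dy = ∫_{ℝ^d} F φ(ξ) · conj(F ψ(ξ)) μ(dξ), where F φ(ξ) = ∫ φ(x) e^{−2πi ξ·x} dx. In particular, the bilinear form (φ,ψ) ↦ ∫∫ φ(x) f(x−y) ψ(y) dx dy is a positive semi-definite symmetric form on S(ℝ^d). -/

import Mathlib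

open MeasureTheory Complex
open scoped ENNReal SchwartzMap FourierTransform RealInnerProductSpace Real

variable {d : ℕ}

noncomputable abbrev ES (d : ℕ) := EuclideanSpace ℝ (Fin d)

lemma tg_sub (x : ES d) : Function.HasTemperateGrowth (fun z : ES d => x - z) := by
  apply Function.HasTemperateGrowth.of_fderiv (k := 1) (C := 1 + ‖x‖)
  · have : (fderiv ℝ (fun z : ES d => x - z)) = fun _ => -(ContinuousLinearMap.id ℝ (ES d)) := by
      funext z
      exact ((hasFDerivAt_id z).const_sub x).fderiv
    rw [this]
    exact Function.HasTemperateGrowth.const _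
  · exact (differentiable_id.const_sub x)
  · intro z
    have : ‖x - z‖ ≤ ‖x‖ + ‖z‖ := norm_sub_le _ _
    nlinarith [norm_nonneg z, norm_nonneg x]

/-- translate-reflect of a Schwartz function -/
noncomputable def trefl (x : ES d) (ψ : 𝓢(ES d, ℝ)) : 𝓢(ES d, ℝ) :=
  SchwartzMap.compCLM ℝ (tg_sub x)
    ⟨1, 1 + ‖x‖, fun z => by
      have : ‖z‖ ≤ ‖x‖ + ‖x - z‖ := by
        calc ‖z‖ = ‖x - (x - z)‖ := by rw [sub_sub_cancel]
        _ ≤ ‖x‖ + ‖x - z‖ := norm_sub_le _ _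
      nlinarith [norm_nonneg (x - z), norm_nonneg x]⟩ ψ

@[simp] lemma trefl_apply (x : ES d) (ψ : 𝓢(ES d, ℝ)) (z : ES d) :
    trefl x ψ z = ψ (x - z) := rfl

/-- real Schwartz as complex Schwartz -/
noncomputable def toC (ψ : 𝓢(ES d, ℝ)) : 𝓢(ES d, ℂ) :=
  SchwartzMap.bilinLeftCLM (ContinuousLinearMap.lsmul ℝ ℝ : ℝ →L[ℝ] ℂ →L[ℝ] ℂ)
    (Function.HasTemperateGrowth.const (1 : ℂ)) ψ

@[simp] lemma toC_apply (ψ : 𝓢(ES d, ℝ)) (z : ES d) : toC ψ z = (ψ z : ℂ) := by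
  change (ψ z : ℝ) • (1 : ℂ) = _
  simp [Complex.real_smul]

lemma toC_coe (ψ : 𝓢(ES d, ℝ)) : (toC ψ : ES d → ℂ) = fun z => (ψ z : ℂ) := by
  funext z; exact toC_apply ψ z

lemma weight_eq (m : ℕ) (ξ : ES d) :
    (1 + ‖ξ‖ ^ 2) ^ (-(m : ℝ)) = ((1 + ‖ξ‖ ^ 2) ^ m)⁻¹ := by
  have h : (0:ℝ) < 1 + ‖ξ‖ ^ 2 := by positivity
  rw [Real.rpow_neg h.le, Real.rpow_natCast]

lemma schwartz_mu_integrable {μ : Measure (ES d)} {m : ℕ}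
    (htemp : (∫⁻ ξ, ENNReal.ofReal ((1 + ‖ξ‖ ^ 2) ^ (-(m : ℝ))) ∂μ) < ⊤)
    (g : 𝓢(ES d, ℂ)) : Integrable (fun ξ => g ξ) μ := by
  set C : ℝ := 2 ^ (2 * m) *
    (Finset.Iic (2 * m, 0)).sup (schwartzSeminormFamily ℝ (ES d) ℂ) g with hC
  have hC0 : 0 ≤ C := by positivity
  have hbound : ∀ ξ : ES d, ‖g ξ‖ ≤ C * ((1 + ‖ξ‖ ^ 2) ^ m)⁻¹ := by
    intro ξ
    have h1 : (1 + ‖ξ‖) ^ (2 * m) * ‖g ξ‖ ≤ C := by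
      have := SchwartzMap.one_add_le_sup_seminorm_apply (𝕜 := ℝ) (m := (2 * m, 0))
        (k := 2 * m) (n := 0) le_rfl le_rfl g ξ
      rwa [norm_iteratedFDeriv_zero] at this
    have h2 : (1 + ‖ξ‖ ^ 2) ^ m ≤ (1 + ‖ξ‖) ^ (2 * m) := by
      rw [pow_mul]
      apply pow_le_pow_left₀ (by positivity)
      nlinarith [norm_nonneg ξ]
    have hpos : (0:ℝ) < (1 + ‖ξ‖ ^ 2) ^ m := by positivity
    have h3 : ‖g ξ‖ * (1 + ‖ξ‖ ^ 2) ^ m ≤ C := by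
      calc ‖g ξ‖ * (1 + ‖ξ‖ ^ 2) ^ m ≤ ‖g ξ‖ * (1 + ‖ξ‖) ^ (2 * m) := by
            gcongr
        _ = (1 + ‖ξ‖) ^ (2 * m) * ‖g ξ‖ := mul_comm _ _
        _ ≤ C := h1
    rw [mul_comm C, ← div_eq_inv_mul]
    exact (le_div_iff₀ hpos).2 h3
  have hcont : Continuous fun ξ : ES d => C * ((1 + ‖ξ‖ ^ 2) ^ m)⁻¹ := by
    apply continuous_const.mul
    apply Continuous.inv₀ (by continuity)
    intro ξ; positivity
  have hint : Integrable (fun ξ : ES d => C * ((1 + ‖ξ‖ ^ 2) ^ m)⁻¹) μ := by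
    refine ⟨hcont.aestronglyMeasurable, ?_⟩
    rw [hasFiniteIntegral_iff_ofReal (ae_of_all _ (fun ξ => by positivity))]
    have : ∀ ξ : ES d, ENNReal.ofReal (C * ((1 + ‖ξ‖ ^ 2) ^ m)⁻¹)
        = ENNReal.ofReal C * ENNReal.ofReal ((1 + ‖ξ‖ ^ 2) ^ (-(m : ℝ))) := by
      intro ξ; rw [weight_eq, ENNReal.ofReal_mul hC0]
    simp_rw [this]
    rw [lintegral_const_mul' _ _ ENNReal.ofReal_ne_top]
    exact ENNReal.mul_lt_top ENNReal.ofReal_lt_top htemp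
  exact hint.mono' g.continuous.aestronglyMeasurable (ae_of_all _ hbound)

lemma sigmaFinite_of_temp {μ : Measure (ES d)} {m : ℕ}
    (htemp : (∫⁻ ξ, ENNReal.ofReal ((1 + ‖ξ‖ ^ 2) ^ (-(m : ℝ))) ∂μ) < ⊤) :
    SigmaFinite μ := by
  set f : ES d → ℝ≥0∞ := fun ξ => ENNReal.ofReal ((1 + ‖ξ‖ ^ 2) ^ (-(m : ℝ))) with hf
  have hfm : Measurable f := by
    apply ENNReal.measurable_ofReal.comp
    apply Continuous.measurable
    apply Continuous.rpow_const (by continuity)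
    intro ξ; left; positivity
  apply Measure.sigmaFinite_of_countable (Set.countable_range
    (fun n : ℕ => {ξ : ES d | (1 : ℝ≥0∞) / (n + 1) ≤ f ξ}))
  · rintro s ⟨n, rfl⟩
    have hε : (1 : ℝ≥0∞) / (n + 1) ≠ 0 := by
      simp [ENNReal.div_eq_top]
    have := mul_meas_ge_le_lintegral (μ := μ) hfm ((1 : ℝ≥0∞) / (n + 1))
    by_contra h
    push_neg at h
    rw [top_le_iff] at h
    rw [h, ENNReal.mul_top hε] at this
    rw [top_le_iff] at this
    rw [this] at htemp
    exact absurd htemp (by simp)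
  · apply Set.eq_univ_of_forall
    intro ξ
    have hpos : 0 < f ξ := by
      rw [hf]
      simp only [ENNReal.ofReal_pos]
      positivity
    obtain ⟨n, hn⟩ := ENNReal.exists_inv_nat_lt hpos.ne'
    refine Set.mem_sUnion.2 ⟨_, ⟨n, rfl⟩, ?_⟩
    simp only [Set.mem_setOf_eq]
    calc (1:ℝ≥0∞) / (n+1) ≤ (n:ℝ≥0∞)⁻¹ := by
          rw [one_div]
          exact ENNReal.inv_le_inv.2 (by exact_mod_cast Nat.le_succ n)
      _ ≤ f ξ := hn.le

lemma ofReal_integral' {α : Type*} [MeasurableSpace α] (μ : Measure α) (g : α → ℝ) :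
    ((∫ x, g x ∂μ : ℝ) : ℂ) = ∫ x, ((g x : ℝ) : ℂ) ∂μ := by
  simpa using (integral_ofReal (𝕜 := ℂ) (f := g) (μ := μ)).symm

lemma conj_fourier (ψ : 𝓢(ES d, ℝ)) (ξ : ES d) :
    (starRingEnd ℂ) (FourierTransform.fourier (fun z => ((ψ z : ℝ) : ℂ)) ξ)
      = ∫ v, Complex.exp ((2 * π * ⟪v, ξ⟫ : ℝ) * Complex.I) * ((ψ v : ℝ) : ℂ) := by
  rw [Real.fourier_eq', ← integral_conj]
  congr 1
  funext v
  rw [smul_eq_mul, map_mul, Complex.conj_ofReal, ← Complex.exp_conj]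
  congr 1
  rw [map_mul, Complex.conj_ofReal, Complex.conj_I]
  push_cast
  ring

lemma fourier_trefl (ψ : 𝓢(ES d, ℝ)) (x ξ : ES d) :
    FourierTransform.fourier (fun z => ((ψ (x - z) : ℝ) : ℂ)) ξ
      = Complex.exp ((-2 * π * ⟪x, ξ⟫ : ℝ) * Complex.I) *
          (starRingEnd ℂ) (FourierTransform.fourier (fun z => ((ψ z : ℝ) : ℂ)) ξ) := by
  rw [conj_fourier, Real.fourier_eq']
  calc (∫ v, Complex.exp ((-2 * π * ⟪v, ξ⟫ : ℝ) * Complex.I) • ((ψ (x - v) : ℝ) : ℂ))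
      = ∫ v, Complex.exp ((-2 * π * ⟪x - v, ξ⟫ : ℝ) * Complex.I) •
          ((ψ (x - (x - v)) : ℝ) : ℂ) :=
        (integral_sub_left_eq_self
          (fun v => Complex.exp ((-2 * π * ⟪v, ξ⟫ : ℝ) * Complex.I) • ((ψ (x - v) : ℝ) : ℂ))
          volume x).symm
    _ = ∫ v, Complex.exp ((-2 * π * ⟪x, ξ⟫ : ℝ) * Complex.I) *
          (Complex.exp ((2 * π * ⟪v, ξ⟫ : ℝ) * Complex.I) * ((ψ v : ℝ) : ℂ)) := by
        congr 1
        funext v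
        rw [sub_sub_cancel, smul_eq_mul, ← mul_assoc, ← Complex.exp_add]
        congr 2
        rw [inner_sub_left]
        push_cast
        ring
    _ = _ := integral_const_mul _ _

set_option maxHeartbeats 1000000 in
/-- If `f : ℝ^d → [0,∞)` is continuous away from `0`, integrable near `0`, and is the
Fourier transform of a non-negative tempered measure `μ` (i.e.
`∫ f φ = ∫ Fφ dμ` for all Schwartz `φ`), then for all Schwartz `φ, ψ`,
`∫∫ φ(x) f(x−y) ψ(y) dx dy = ∫ Fφ(ξ) conj(Fψ(ξ)) μ(dξ)`; in particular the bilinear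
form `(φ,ψ) ↦ ∫∫ φ(x) f(x−y) ψ(y) dx dy` is symmetric and positive semi-definite. -/
theorem covariance_form_parseval
    (d : ℕ) (f : EuclideanSpace ℝ (Fin d) → ℝ)
    (hf0 : ∀ x, 0 ≤ f x)
    (hfc : ContinuousOn f {x : EuclideanSpace ℝ (Fin d) | x ≠ 0})
    (hfi : IntegrableOn f (Metric.ball 0 1))
    (μ : Measure (EuclideanSpace ℝ (Fin d)))
    (m : ℕ) (hm : 1 ≤ m)
    (htemp : (∫⁻ ξ, ENNReal.ofReal ((1 + ‖ξ‖ ^ 2) ^ (-(m : ℝ))) ∂μ) < ⊤)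
    (hrep : ∀ φ : 𝓢(EuclideanSpace ℝ (Fin d), ℝ),
      ((∫ x, f x * φ x : ℝ) : ℂ)
        = ∫ ξ, FourierTransform.fourier (fun x => (φ x : ℂ)) ξ ∂μ) :
    ∀ φ ψ : 𝓢(EuclideanSpace ℝ (Fin d), ℝ),
      (((∫ x, ∫ y, φ x * f (x - y) * ψ y : ℝ)) : ℂ)
          = ∫ ξ, FourierTransform.fourier (fun x => (φ x : ℂ)) ξ *
              (starRingEnd ℂ) (FourierTransform.fourier (fun x => (ψ x : ℂ)) ξ) ∂μ ∧
        (∫ x, ∫ y, φ x * f (x - y) * ψ y) = (∫ x, ∫ y, ψ x * f (x - y) * φ y) ∧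
        0 ≤ ∫ x, ∫ y, φ x * f (x - y) * φ y := by
  haveI hSF : SigmaFinite μ := sigmaFinite_of_temp htemp
  have hFint : ∀ ψ : 𝓢(ES d, ℝ),
      Integrable (fun ξ => FourierTransform.fourier (fun z => ((ψ z : ℝ) : ℂ)) ξ) μ := by
    intro ψ
    have he : (fun ξ => FourierTransform.fourier (fun z => ((ψ z : ℝ) : ℂ)) ξ)
        = fun ξ => (SchwartzMap.fourierTransformCLM ℝ (toC ψ)) ξ := by
      funext ξ
      rw [SchwartzMap.fourierTransformCLM_apply, SchwartzMap.fourier_coe, toC_coe]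
    rw [he]
    exact schwartz_mu_integrable htemp _
  have hFcont : ∀ ψ : 𝓢(ES d, ℝ),
      Continuous (fun ξ => FourierTransform.fourier (fun z => ((ψ z : ℝ) : ℂ)) ξ) := by
    intro ψ
    have he : (fun ξ => FourierTransform.fourier (fun z => ((ψ z : ℝ) : ℂ)) ξ)
        = fun ξ => (SchwartzMap.fourierTransformCLM ℝ (toC ψ)) ξ := by
      funext ξ
      rw [SchwartzMap.fourierTransformCLM_apply, SchwartzMap.fourier_coe, toC_coe]
    rw [he]
    exact (SchwartzMap.fourierTransformCLM ℝ (toC ψ)).continuous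
  have key : ∀ φ ψ : 𝓢(ES d, ℝ),
      (((∫ x, ∫ y, φ x * f (x - y) * ψ y : ℝ)) : ℂ)
        = ∫ ξ, FourierTransform.fourier (fun x => (φ x : ℂ)) ξ *
            (starRingEnd ℂ) (FourierTransform.fourier (fun x => (ψ x : ℂ)) ξ) ∂μ := by
    intro φ ψ
    have step2 : ∀ x : ES d, ((∫ y, f (x - y) * ψ y : ℝ) : ℂ)
        = ∫ ξ, Complex.exp ((-2 * π * ⟪x, ξ⟫ : ℝ) * Complex.I) *
            (starRingEnd ℂ) (FourierTransform.fourier (fun z => ((ψ z : ℝ) : ℂ)) ξ) ∂μ := by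
      intro x
      have h1 : (∫ y, f (x - y) * ψ y) = ∫ z, f z * trefl x ψ z := by
        calc (∫ y, f (x - y) * ψ y) = ∫ y, f (x - y) * ψ (x - (x - y)) := by
              simp only [sub_sub_cancel]
          _ = ∫ z, f z * ψ (x - z) :=
              integral_sub_left_eq_self (fun z => f z * ψ (x - z)) volume x
          _ = ∫ z, f z * trefl x ψ z := rfl
      rw [h1, hrep (trefl x ψ)]
      congr 1
      funext ξ
      have h2 : (fun z => ((trefl x ψ) z : ℂ)) = fun z => ((ψ (x - z) : ℝ) : ℂ) := by
        funext z; rw [trefl_apply]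
      rw [h2, fourier_trefl]
    have hprod : Integrable (Function.uncurry fun (x : ES d) (ξ : ES d) =>
        ((φ x : ℝ) : ℂ) * (Complex.exp ((-2 * π * ⟪x, ξ⟫ : ℝ) * Complex.I) *
          (starRingEnd ℂ) (FourierTransform.fourier (fun z => ((ψ z : ℝ) : ℂ)) ξ)))
        ((volume : Measure (ES d)).prod μ) := by
      have hmeas : AEStronglyMeasurable (Function.uncurry fun (x : ES d) (ξ : ES d) =>
          ((φ x : ℝ) : ℂ) * (Complex.exp ((-2 * π * ⟪x, ξ⟫ : ℝ) * Complex.I) *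
            (starRingEnd ℂ) (FourierTransform.fourier (fun z => ((ψ z : ℝ) : ℂ)) ξ)))
          ((volume : Measure (ES d)).prod μ) := by
        apply Continuous.aestronglyMeasurable
        apply Continuous.mul
        · exact Complex.continuous_ofReal.comp (φ.continuous.comp continuous_fst)
        apply Continuous.mul
        · exact Complex.continuous_exp.comp
            ((Complex.continuous_ofReal.comp
              ((continuous_const.mul continuous_inner))).mul continuous_const)
        · exact (continuous_conj.comp ((hFcont ψ).comp continuous_snd))
      have hbd : Integrable (fun p : ES d × ES d => ‖φ p.1‖ *
          ‖FourierTransform.fourier (fun z => ((ψ z : ℝ) : ℂ)) p.2‖)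
          ((volume : Measure (ES d)).prod μ) :=
        (φ.integrable.norm).mul_prod (hFint ψ).norm
      refine hbd.mono' hmeas (ae_of_all _ ?_)
      rintro ⟨x, ξ⟩
      simp only [Function.uncurry_apply_pair, norm_mul, Complex.norm_exp_ofReal_mul_I,
        one_mul, RCLike.norm_conj, Complex.norm_real]
      exact le_rfl
    calc (((∫ x, ∫ y, φ x * f (x - y) * ψ y : ℝ)) : ℂ)
        = (((∫ x, φ x * ∫ y, f (x - y) * ψ y : ℝ)) : ℂ) := by
          norm_cast
          congr 1
          funext x
          simp_rw [mul_assoc]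
          exact integral_const_mul _ _
      _ = ∫ x, ((φ x : ℝ) : ℂ) * ((∫ y, f (x - y) * ψ y : ℝ) : ℂ) := by
          rw [ofReal_integral']
          congr 1
          funext x
          norm_cast
      _ = ∫ x, ((φ x : ℝ) : ℂ) *
            ∫ ξ, Complex.exp ((-2 * π * ⟪x, ξ⟫ : ℝ) * Complex.I) *
              (starRingEnd ℂ) (FourierTransform.fourier (fun z => ((ψ z : ℝ) : ℂ)) ξ) ∂μ := by
          congr 1
          funext x
          rw [step2 x]
      _ = ∫ x, ∫ ξ, ((φ x : ℝ) : ℂ) *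
            (Complex.exp ((-2 * π * ⟪x, ξ⟫ : ℝ) * Complex.I) *
              (starRingEnd ℂ) (FourierTransform.fourier (fun z => ((ψ z : ℝ) : ℂ)) ξ)) ∂μ := by
          congr 1
          funext x
          rw [integral_const_mul]
      _ = ∫ ξ, (∫ x, ((φ x : ℝ) : ℂ) *
            (Complex.exp ((-2 * π * ⟪x, ξ⟫ : ℝ) * Complex.I) *
              (starRingEnd ℂ) (FourierTransform.fourier (fun z => ((ψ z : ℝ) : ℂ)) ξ))) ∂μ := by
          exact integral_integral_swap hprod
      _ = ∫ ξ, (∫ x, Complex.exp ((-2 * π * ⟪x, ξ⟫ : ℝ) * Complex.I) * ((φ x : ℝ) : ℂ)) *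
            (starRingEnd ℂ) (FourierTransform.fourier (fun z => ((ψ z : ℝ) : ℂ)) ξ) ∂μ := by
          congr 1
          funext ξ
          rw [← integral_mul_const]
          congr 1
          funext x
          ring
      _ = ∫ ξ, FourierTransform.fourier (fun x => (φ x : ℂ)) ξ *
            (starRingEnd ℂ) (FourierTransform.fourier (fun x => (ψ x : ℂ)) ξ) ∂μ := by
          congr 1
          funext ξ
          congr 1
          rw [Real.fourier_eq']
          congr 1
  intro φ ψ
  refine ⟨key φ ψ, ?_, ?_⟩
  · have h1 := key φ ψ
    have h2 := key ψ φ
    have hconj : (∫ ξ, FourierTransform.fourier (fun x => (ψ x : ℂ)) ξ *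
        (starRingEnd ℂ) (FourierTransform.fourier (fun x => (φ x : ℂ)) ξ) ∂μ)
        = (starRingEnd ℂ) (∫ ξ, FourierTransform.fourier (fun x => (φ x : ℂ)) ξ *
            (starRingEnd ℂ) (FourierTransform.fourier (fun x => (ψ x : ℂ)) ξ) ∂μ) := by
      rw [← integral_conj]
      congr 1
      funext ξ
      rw [map_mul, Complex.conj_conj]
      ring
    have h3 : ((∫ x, ∫ y, ψ x * f (x - y) * φ y : ℝ) : ℂ)
        = ((∫ x, ∫ y, φ x * f (x - y) * ψ y : ℝ) : ℂ) := by
      rw [h2, hconj, ← h1, Complex.conj_ofReal]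
    exact_mod_cast h3.symm
  · have h1 := key φ φ
    have h2 : (∫ ξ, FourierTransform.fourier (fun x => (φ x : ℂ)) ξ *
        (starRingEnd ℂ) (FourierTransform.fourier (fun x => (φ x : ℂ)) ξ) ∂μ)
        = ((∫ ξ, Complex.normSq (FourierTransform.fourier (fun x => (φ x : ℂ)) ξ) ∂μ : ℝ) : ℂ) := by
      rw [ofReal_integral']
      congr 1
      funext ξ
      rw [Complex.mul_conj]
    have h3 : (∫ x, ∫ y, φ x * f (x - y) * φ y)
        = ∫ ξ, Complex.normSq (FourierTransform.fourier (fun x => (φ x : ℂ)) ξ) ∂μ := by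
      have := h1.trans h2
      exact_mod_cast this
    rw [h3]
    exact integral_nonneg fun ξ => Complex.normSq_nonneg _
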